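/- Fix s > 0 with c₀, τ₀ as on the curve C₂ (so that m_{τ₀}(s) = c₀ and m_{τ₀}'(s) = 0). Then 0 < τ₀ < 1/3 and 0 < c₀ < 1. -/

import Mathlib

open Real

/-- Generic positivity lemma: if `f 0 = 0` and `f` has positive derivative `f'` on
positive reals, then `f` is positive on positive reals. -/
lemma aux_pos_of_deriv_pos {f f' : ℝ → ℝ} (hd : ∀ x : ℝ, HasDerivAt f (f' x) x)
    (h0 : f 0 = 0) (hp : ∀ x : ℝ, 0 < x → 0 < f' x) :
    ∀ x : ℝ, 0 < x → 0 < f x := by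
  intro x hx
  have hmono : StrictMonoOn f (Set.Ici (0 : ℝ)) := by
    apply strictMonoOn_of_deriv_pos (convex_Ici 0)
    · exact fun y _ => (hd y).differentiableAt.continuousAt.continuousWithinAt
    · intro y hy
      rw [interior_Ici] at hy
      rw [(hd y).deriv]
      exact hp y hy
  have := hmono (Set.self_mem_Ici) (Set.mem_Ici.mpr hx.le) hx
  rwa [h0] at this

lemma aux_sinh_lt_self_cosh {x : ℝ} (hx : 0 < x) :
    Real.sinh x < x * Real.cosh x := by
  have h := aux_pos_of_deriv_pos (f := fun y => y * Real.cosh y - Real.sinh y)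
      (f' := fun y => y * Real.sinh y)
      (fun y => by
        have h1 : HasDerivAt (fun y : ℝ => y * Real.cosh y)
            (1 * Real.cosh y + y * Real.sinh y) y :=
          (hasDerivAt_id y).mul (Real.hasDerivAt_cosh y)
        have h2 := h1.sub (Real.hasDerivAt_sinh y)
        exact h2.congr_deriv (by ring))
      (by simp)
      (fun y hy => mul_pos hy (Real.sinh_pos_iff.mpr hy)) x hx
  linarith

/-- `s² + s·sinh s·cosh s - 2·sinh² s > 0` for `s > 0`. -/
lemma aux_ineq1 {s : ℝ} (hs : 0 < s) :
    2 * Real.sinh s ^ 2 < s ^ 2 + s * (Real.sinh s * Real.cosh s) := by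
  have hf' := aux_pos_of_deriv_pos
      (f := fun y => 2*y + Real.sinh y * Real.cosh y + y * (Real.cosh y ^ 2 + Real.sinh y ^ 2)
            - 4 * (Real.sinh y * Real.cosh y))
      (f' := fun y => 2 + 2 * (Real.cosh y ^ 2 + Real.sinh y ^ 2)
            + 4 * y * (Real.sinh y * Real.cosh y) - 4 * (Real.cosh y ^ 2 + Real.sinh y ^ 2))
      (fun y => by
        have hs' := Real.hasDerivAt_sinh y
        have hc' := Real.hasDerivAt_cosh y
        have h1 := (((hasDerivAt_id y).const_mul 2).add
          ((hs'.mul hc').add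
            ((hasDerivAt_id y).mul ((hc'.pow 2).add (hs'.pow 2))))).sub
            ((hs'.mul hc').const_mul 4)
        refine (h1.congr_deriv ?_).congr_of_eventuallyEq (Filter.Eventually.of_forall fun z => ?_)
        all_goals simp only [id_eq, Pi.add_apply, Pi.mul_apply, Pi.pow_apply, Pi.sub_apply]; push_cast; ring)
      (by simp)
      (fun y hy => by
        beta_reduce
        have h1 : 0 < Real.sinh y := Real.sinh_pos_iff.mpr hy
        have h2 : Real.sinh y < y * Real.cosh y := aux_sinh_lt_self_cosh hy
        have h3 : Real.cosh y ^ 2 - Real.sinh y ^ 2 = 1 := Real.cosh_sq_sub_sinh_sq y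
        nlinarith [mul_pos h1 (sub_pos.mpr h2)])
  have hf := aux_pos_of_deriv_pos
      (f := fun y => y^2 + y * (Real.sinh y * Real.cosh y) - 2 * Real.sinh y ^ 2)
      (f' := fun y => 2*y + Real.sinh y * Real.cosh y + y * (Real.cosh y ^ 2 + Real.sinh y ^ 2)
            - 4 * (Real.sinh y * Real.cosh y))
      (fun y => by
        have hs' := Real.hasDerivAt_sinh y
        have hc' := Real.hasDerivAt_cosh y
        have h1 := ((hasDerivAt_pow 2 y).add ((hasDerivAt_id y).mul (hs'.mul hc'))).sub
          ((hs'.pow 2).const_mul 2)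
        refine h1.congr_deriv ?_
        simp only [id_eq, Pi.add_apply, Pi.mul_apply, Pi.pow_apply, Pi.sub_apply]; push_cast; ring)
      (by simp)
      hf'
  have := hf s hs
  linarith

/-- `3·sinh s·cosh s - 3 s < s³ + s²·sinh s·cosh s` for `s > 0`. -/
lemma aux_ineq2 {s : ℝ} (hs : 0 < s) :
    3 * (Real.sinh s * Real.cosh s) - 3 * s < s ^ 3 + s ^ 2 * (Real.sinh s * Real.cosh s) := by
  have hH'' := aux_pos_of_deriv_pos
      (f := fun y => 6*y + 2*(Real.sinh y * Real.cosh y)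
            + 4*y*(Real.cosh y ^ 2 + Real.sinh y ^ 2)
            + 4*y^2*(Real.sinh y * Real.cosh y) - 12*(Real.sinh y * Real.cosh y))
      (f' := fun y => 6 - 6*(Real.cosh y ^ 2 + Real.sinh y ^ 2)
            + 24*y*(Real.sinh y * Real.cosh y) + 4*y^2*(Real.cosh y ^ 2 + Real.sinh y ^ 2))
      (fun y => by
        have hs' := Real.hasDerivAt_sinh y
        have hc' := Real.hasDerivAt_cosh y
        have h1 := (((((hasDerivAt_id y).const_mul 6).add
            ((hs'.mul hc').const_mul 2)).add
              ((((hasDerivAt_id y).const_mul 4).mul ((hc'.pow 2).add (hs'.pow 2))).add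
                (((hasDerivAt_pow 2 y).const_mul 4).mul (hs'.mul hc')))).sub
          ((hs'.mul hc').const_mul 12))
        refine (h1.congr_deriv ?_).congr_of_eventuallyEq (Filter.Eventually.of_forall fun z => ?_)
        all_goals simp only [id_eq, Pi.add_apply, Pi.mul_apply, Pi.pow_apply, Pi.sub_apply]; push_cast; ring)
      (by simp)
      (fun y hy => by
        beta_reduce
        have h1 : 0 < Real.sinh y := Real.sinh_pos_iff.mpr hy
        have h2 : Real.sinh y < y * Real.cosh y := aux_sinh_lt_self_cosh hy
        have h3 : Real.cosh y ^ 2 - Real.sinh y ^ 2 = 1 := Real.cosh_sq_sub_sinh_sq y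
        nlinarith [mul_pos h1 (sub_pos.mpr h2), sq_nonneg y,
          mul_pos (mul_pos hy hy) (mul_pos h1 h1)])
  have hH' := aux_pos_of_deriv_pos
      (f := fun y => 3*y^2 + 2*y*(Real.sinh y * Real.cosh y)
            + y^2*(Real.cosh y ^ 2 + Real.sinh y ^ 2)
            + 3 - 3*(Real.cosh y ^ 2 + Real.sinh y ^ 2))
      (f' := fun y => 6*y + 2*(Real.sinh y * Real.cosh y)
            + 4*y*(Real.cosh y ^ 2 + Real.sinh y ^ 2)
            + 4*y^2*(Real.sinh y * Real.cosh y) - 12*(Real.sinh y * Real.cosh y))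
      (fun y => by
        have hs' := Real.hasDerivAt_sinh y
        have hc' := Real.hasDerivAt_cosh y
        have h1 := (((((hasDerivAt_pow 2 y).const_mul 3).add
            ((((hasDerivAt_id y).const_mul 2).mul (hs'.mul hc')))).add
              ((hasDerivAt_pow 2 y).mul ((hc'.pow 2).add (hs'.pow 2)))).add
            (hasDerivAt_const y 3)).sub
          (((hc'.pow 2).add (hs'.pow 2)).const_mul 3)
        refine h1.congr_deriv ?_
        simp only [id_eq, Pi.add_apply, Pi.mul_apply, Pi.pow_apply, Pi.sub_apply]; push_cast; ring)
      (by simp)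
      hH''
  have hH := aux_pos_of_deriv_pos
      (f := fun y => y^3 + y^2*(Real.sinh y * Real.cosh y) + 3*y - 3*(Real.sinh y * Real.cosh y))
      (f' := fun y => 3*y^2 + 2*y*(Real.sinh y * Real.cosh y)
            + y^2*(Real.cosh y ^ 2 + Real.sinh y ^ 2)
            + 3 - 3*(Real.cosh y ^ 2 + Real.sinh y ^ 2))
      (fun y => by
        have hs' := Real.hasDerivAt_sinh y
        have hc' := Real.hasDerivAt_cosh y
        have h1 := ((((hasDerivAt_pow 3 y).add
            ((hasDerivAt_pow 2 y).mul (hs'.mul hc'))).add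
            ((hasDerivAt_id y).const_mul 3)).sub
          ((hs'.mul hc').const_mul 3))
        refine h1.congr_deriv ?_
        simp only [id_eq, Pi.add_apply, Pi.mul_apply, Pi.pow_apply, Pi.sub_apply]; push_cast; ring)
      (by simp)
      hH'
  have := hH s hs
  linarith

theorem curve_C2_parameter_region (s : ℝ) (hs : 0 < s)
    (c0sq : ℝ) (hc0 : c0sq = (s ^ 2 / (2 * Real.sinh s ^ 2) + s / (2 * Real.tanh s))⁻¹)
    (τ₀ : ℝ) (hτ₀ : τ₀ = c0sq * (-(1 / (2 * Real.sinh s ^ 2)) + 1 / (2 * s * Real.tanh s))) :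
    0 < τ₀ ∧ τ₀ < 1/3 ∧ 0 < Real.sqrt c0sq ∧ Real.sqrt c0sq < 1 := by
  have hsh : 0 < Real.sinh s := Real.sinh_pos_iff.mpr hs
  have hch : 0 < Real.cosh s := Real.cosh_pos s
  have hth : Real.tanh s = Real.sinh s / Real.cosh s := Real.tanh_eq_sinh_div_cosh s
  have hthpos : 0 < Real.tanh s := by rw [hth]; positivity
  have hB : s ^ 2 / (2 * Real.sinh s ^ 2) + s / (2 * Real.tanh s)
      = (s ^ 2 + s * (Real.sinh s * Real.cosh s)) / (2 * Real.sinh s ^ 2) := by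
    rw [hth]; field_simp
  have hA : -(1 / (2 * Real.sinh s ^ 2)) + 1 / (2 * s * Real.tanh s)
      = (Real.sinh s * Real.cosh s - s) / (2 * s * Real.sinh s ^ 2) := by
    rw [hth]; field_simp; ring
  have hNum : 0 < s ^ 2 + s * (Real.sinh s * Real.cosh s) := by positivity
  have hBpos : 0 < s ^ 2 / (2 * Real.sinh s ^ 2) + s / (2 * Real.tanh s) := by
    rw [hB]; positivity
  have hc0pos : 0 < c0sq := by rw [hc0]; exact inv_pos.mpr hBpos
  have hscs : s < Real.sinh s * Real.cosh s := by
    have h1 : s < Real.sinh s := Real.self_lt_sinh_iff.mpr hs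
    nlinarith [Real.one_le_cosh s]
  have hApos : 0 < -(1 / (2 * Real.sinh s ^ 2)) + 1 / (2 * s * Real.tanh s) := by
    rw [hA]; apply div_pos (by linarith) (by positivity)
  have hc0eq : c0sq = 2 * Real.sinh s ^ 2 / (s ^ 2 + s * (Real.sinh s * Real.cosh s)) := by
    rw [hc0, hB, inv_div]
  refine ⟨?_, ?_, Real.sqrt_pos.mpr hc0pos, ?_⟩
  · rw [hτ₀]; exact mul_pos hc0pos hApos
  · rw [hτ₀, hA, hc0eq]
    rw [div_mul_div_comm, div_lt_div_iff₀ (by positivity) (by norm_num)]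
    have h2 := aux_ineq2 hs
    nlinarith [mul_lt_mul_of_pos_left h2 (show (0:ℝ) < 2*Real.sinh s^2 by positivity)]
  · have hlt : c0sq < 1 := by
      rw [hc0eq, div_lt_one hNum]
      exact aux_ineq1 hs
    have := Real.sqrt_lt_sqrt hc0pos.le hlt
    rwa [Real.sqrt_one] at this
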